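/- Let U ⊆ ℝ^d be nonempty, closed, and convex with projection Π_U, let F : ℝ^d → ℝ^d be (1/L)-cocoercive, and define G(u) = L(u − Π_U(u − F(u)/L)). Let (A_k)_{k≥1}, (B_k)_{k≥1} be positive non-decreasing sequences satisfying, for all k ≥ 2, B_{k-1}/A_k = B_k/(A_k+B_k) and 1 − 2B_k/(A_k+B_k) = A_{k-1}/A_k. Fix u_0 and for k ≥ 1 let u_k = λ_k u_0 + (1 − λ_k)(u_{k-1} − g̃_{k-1}/L), where λ_k = B_k/(A_k+B_k) and g̃_{k-1} = L(u_{k-1} − Π_U(u_{k-1} − h_{k-1}/L)) for an arbitrary vector h_{k-1} ∈ ℝ^d (the stochastic operator mapping built from an estimate of F(u_{k-1})). Define C_k = (A_k/(2L))‖G(u_k)‖² + B_k⟨G(u_k), u_k − u_0⟩. Then for every k ≥ 2, C_k − C_{k-1} ≤ (A_k/L)‖G(u_{k-1}) − g̃_{k-1}‖² + ((A_k − A_{k-1})/(2L)) ⟨G(u_{k-1}), G(u_{k-1}) − g̃_{k-1}⟩. -/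

import Mathlib

open scoped RealInnerProductSpace

lemma proj_var_ineq {d : ℕ} {U : Set (EuclideanSpace ℝ (Fin d))} (hUconv : Convex ℝ U)
    (proj : EuclideanSpace ℝ (Fin d) → EuclideanSpace ℝ (Fin d))
    (hproj : ∀ x, proj x ∈ U ∧ ∀ y ∈ U, ‖x - proj x‖ ≤ ‖x - y‖) :
    ∀ x, ∀ y ∈ U, ⟪x - proj x, y - proj x⟫ ≤ 0 := by
  intro x y hy
  by_contra hcon
  push_neg at hcon
  set c : ℝ := ⟪x - proj x, y - proj x⟫ with hc
  set r : ℝ := ‖y - proj x‖^2 with hr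
  have hrpos : 0 < r := by
    rcases eq_or_ne y (proj x) with he | he
    · exfalso; rw [hc, he] at hcon; simp at hcon
    · have h0 : y - proj x ≠ 0 := sub_ne_zero.2 he
      have := norm_pos_iff.mpr h0
      rw [hr]; positivity
  set s : ℝ := min 1 (c / r) with hs
  have hspos : 0 < s := lt_min one_pos (div_pos hcon hrpos)
  have hs1 : s ≤ 1 := min_le_left _ _
  have hz : (1 - s) • proj x + s • y ∈ U :=
    hUconv (hproj x).1 hy (by linarith) hspos.le (by ring)
  have hle := (hproj x).2 _ hz
  have hnorm : ‖x - ((1 - s) • proj x + s • y)‖^2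
      = ‖x - proj x‖^2 - 2*(s*c) + s^2 * r := by
    have hv : x - ((1 - s) • proj x + s • y) = (x - proj x) - s • (y - proj x) := by
      module
    rw [hv, norm_sub_sq_real, real_inner_smul_right, norm_smul]
    rw [Real.norm_eq_abs, abs_of_pos hspos]
    rw [hr]; ring
  have hsq : ‖x - proj x‖^2 ≤ ‖x - ((1 - s) • proj x + s • y)‖^2 := by
    have := pow_le_pow_left₀ (norm_nonneg _) hle 2
    exact this
  rw [hnorm] at hsq
  have h2c : 2 * c ≤ s * r := by
    have : 0 ≤ -2*(s*c) + s^2*r := by linarith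
    have h' : s * (2*c) ≤ s * (s * r) := by nlinarith
    exact (mul_le_mul_iff_right₀ hspos).mp (by linarith [h'])
  have hsr : s * r ≤ c := by
    have : s ≤ c / r := min_le_right _ _
    calc s * r ≤ (c/r) * r := by nlinarith
    _ = c := by field_simp
  linarith

lemma aux_coco {E : Type*} [NormedAddCommGroup E] [InnerProductSpace ℝ E]
    (D P e : E) (h1 : 0 ≤ ⟪D - e - P, P⟫) (h2 : ‖e‖^2 ≤ ⟪e, D⟫) :
    (3/4) * ‖D - P‖^2 ≤ ⟪D - P, D⟫ := by
  have hsq : 0 ≤ ‖e - (1/2 : ℝ) • (D - P)‖^2 := by positivity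
  have hexp : ‖e - (1/2 : ℝ) • (D - P)‖^2
      = ‖e‖^2 - (⟪e,D⟫ - ⟪e,P⟫) + (1/4) * ‖D - P‖^2 := by
    rw [norm_sub_sq_real, real_inner_smul_right, inner_sub_right, norm_smul,
      Real.norm_eq_abs]
    rw [show |(1/2 : ℝ)| = 1/2 by norm_num]
    ring
  rw [hexp] at hsq
  have h1' : ⟪D,P⟫ - ⟪e,P⟫ - ‖P‖^2 ≥ 0 := by
    have : ⟪D - e - P, P⟫ = ⟪D,P⟫ - ⟪e,P⟫ - ⟪P,P⟫ := by
      simp [inner_sub_left]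
    rw [this, real_inner_self_eq_norm_sq] at h1; linarith
  have hgoal : ⟪D - P, D⟫ = ‖D‖^2 - ⟪P,D⟫ := by
    simp [inner_sub_left, real_inner_self_eq_norm_sq]
  have hDP : ‖D - P‖^2 = ‖D‖^2 - 2*⟪D,P⟫ + ‖P‖^2 := norm_sub_sq_real D P
  have hcomm : ⟪P,D⟫ = ⟪D,P⟫ := real_inner_comm D P
  rw [hgoal, hcomm, hDP]
  linarith

lemma coco_G {d : ℕ} {U : Set (EuclideanSpace ℝ (Fin d))} (hUconv : Convex ℝ U)
    (proj : EuclideanSpace ℝ (Fin d) → EuclideanSpace ℝ (Fin d))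
    (hproj : ∀ x, proj x ∈ U ∧ ∀ y ∈ U, ‖x - proj x‖ ≤ ‖x - y‖)
    (L : ℝ) (hL : 0 < L)
    (F : EuclideanSpace ℝ (Fin d) → EuclideanSpace ℝ (Fin d))
    (hcoco : ∀ u v, (1 / L) * ‖F u - F v‖ ^ 2 ≤ ⟪F u - F v, u - v⟫)
    (G : EuclideanSpace ℝ (Fin d) → EuclideanSpace ℝ (Fin d))
    (hG : ∀ x, G x = L • (x - proj (x - (1 / L) • F x))) :
    ∀ x y, (3/(4*L)) * ‖G x - G y‖^2 ≤ ⟪G x - G y, x - y⟫ := by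
  have hpv := proj_var_ineq hUconv proj hproj
  intro x y
  set p := proj (x - (1/L) • F x) with hp
  set q := proj (y - (1/L) • F y) with hq
  have h1a := hpv (x - (1/L) • F x) q (hproj _).1
  have h1b := hpv (y - (1/L) • F y) p (hproj _).1
  set D := x - y with hD
  set e := (1/L) • (F x - F y) with he
  set P := p - q with hP
  have h1 : 0 ≤ ⟪D - e - P, P⟫ := by
    have hveq : D - e - P = ((x - (1/L) • F x) - p) - ((y - (1/L) • F y) - q) := by
      rw [hD, he, hP]; module
    rw [hveq, inner_sub_left]
    have hflip : ⟪(x - (1/L) • F x) - p, P⟫ ≥ 0 := by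
      have : ⟪x - (1/L) • F x - p, q - p⟫ = -⟪x - (1/L) • F x - p, P⟫ := by
        rw [hP, ← inner_neg_right, neg_sub]
      linarith [h1a, this ▸ h1a]
    have hflip2 : ⟪(y - (1/L) • F y) - q, P⟫ ≤ 0 := h1b
    linarith
  have h2 : ‖e‖^2 ≤ ⟪e, D⟫ := by
    have hc := hcoco x y
    rw [he, real_inner_smul_left, norm_smul, Real.norm_eq_abs,
      abs_of_pos (by positivity : (0:ℝ) < 1/L), mul_pow]
    have hLi : (0:ℝ) < 1/L := by positivity
    nlinarith [hc]
  have haux := aux_coco D P e h1 h2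
  have hGxy : G x - G y = L • (D - P) := by
    rw [hG x, hG y, ← hp, ← hq, hD, hP]; module
  rw [hGxy, real_inner_smul_left, norm_smul, Real.norm_eq_abs, abs_of_pos hL, mul_pow]
  have : (3/(4*L)) * (L^2 * ‖D - P‖^2) = L * ((3/4) * ‖D - P‖^2) := by
    field_simp
  rw [this]
  exact mul_le_mul_of_nonneg_left haux hL.le

lemma step_main {d : ℕ} (g g' t v w uu : EuclideanSpace ℝ (Fin d))
    (a a' b b' l L : ℝ) (hL : 0 < L) (ha : 0 < a)
    (hb' : b' = a * l) (ha' : a' = a * (1 - 2*l)) (hbl : b * (1 - l) = a * l)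
    (hu : uu = l • w + (1 - l) • (v - (1/L) • t))
    (hkey : (3/(4*L)) * ‖g - g'‖^2 ≤ ⟪g - g', uu - v⟫) :
    (a/(2*L)) * ‖g‖^2 + b * ⟪g, uu - w⟫ - ((a'/(2*L)) * ‖g'‖^2 + b' * ⟪g', v - w⟫)
      ≤ (a/L) * ‖g' - t‖^2 + ((a - a')/(2*L)) * ⟪g', g' - t⟫ := by
  -- atomic expansions
  have e2 : ⟪g - g', uu - v⟫
      = -l*(⟪g,v⟫ - ⟪g,w⟫) + l*(⟪g',v⟫ - ⟪g',w⟫)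
        - ((1-l)/L)*(⟪g,t⟫ - ⟪g',t⟫) := by
    rw [hu]
    simp only [inner_sub_left, inner_sub_right, inner_add_right,
      real_inner_smul_right, smul_sub, smul_smul, inner_smul_right]
    ring
  rw [e2] at hkey
  have hk2 := mul_le_mul_of_nonneg_left hkey ha.le
  have eb : b * ⟪g, uu - w⟫
      = a*l*(⟪g,v⟫ - ⟪g,w⟫) - (a*l/L)*⟪g,t⟫ := by
    have e1 : ⟪g, uu - w⟫ = (1-l) * ((⟪g,v⟫ - ⟪g,w⟫) - (1/L)*⟪g,t⟫) := by
      rw [hu]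
      simp only [inner_sub_left, inner_sub_right, inner_add_right,
        real_inner_smul_right, smul_sub, smul_smul, inner_smul_right]
      ring
    rw [e1]
    linear_combination ((⟪g,v⟫ - ⟪g,w⟫) - (1/L)*⟪g,t⟫) * hbl
  have eg'vw : ⟪g', v - w⟫ = ⟪g',v⟫ - ⟪g',w⟫ := inner_sub_right _ _ _
  have egt : ⟪g', g' - t⟫ = ‖g'‖^2 - ⟪g',t⟫ := by
    rw [inner_sub_right, real_inner_self_eq_norm_sq]
  have hS : ‖g - g'‖^2 = ‖g‖^2 - 2*⟪g,g'⟫ + ‖g'‖^2 := norm_sub_sq_real g g'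
  have hT : ‖g' - t‖^2 = ‖g'‖^2 - 2*⟪g',t⟫ + ‖t‖^2 := norm_sub_sq_real g' t
  have hQ2 : 0 ≤ (a/L) * ‖(1/2 : ℝ) • (g - g') + (t - g')‖^2 := by positivity
  have hQe : ‖(1/2 : ℝ) • (g - g') + (t - g')‖^2
      = (1/4)*‖g - g'‖^2 + (⟪g,t⟫ - ⟪g,g'⟫ - ⟪g',t⟫ + ‖g'‖^2)
        + (‖g'‖^2 - 2*⟪g',t⟫ + ‖t‖^2) := by
    rw [norm_add_sq_real]
    have h1 : ‖(1/2 : ℝ) • (g - g')‖^2 = (1/4)*‖g - g'‖^2 := by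
      rw [norm_smul, Real.norm_eq_abs, mul_pow]
      norm_num
    have h2 : ⟪(1/2 : ℝ) • (g - g'), t - g'⟫
        = (1/2) * (⟪g,t⟫ - ⟪g,g'⟫ - ⟪g',t⟫ + ‖g'‖^2) := by
      rw [real_inner_smul_left]
      simp only [inner_sub_left, inner_sub_right, real_inner_self_eq_norm_sq]
      ring
    have h3 : ‖t - g'‖^2 = ‖g'‖^2 - 2*⟪g',t⟫ + ‖t‖^2 := by
      rw [norm_sub_rev]; exact hT
    rw [h1, h2, h3]; ring
  rw [hQe] at hQ2
  rw [hS] at hk2 hQ2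
  rw [eb, eg'vw, egt, hT, ha', hb']
  ring_nf at hk2 hQ2 ⊢
  linarith [hk2, hQ2]

/-- One-step potential decrease bound for the constrained Halpern iteration
built from the operator mapping `G(u) = L(u − Π_U(u − F(u)/L))` of a `(1/L)`-cocoercive `F`,
with inexact operator mapping `g̃_{k-1} = L(u_{k-1} − Π_U(u_{k-1} − h_{k-1}/L))`. -/
theorem halpern_potential_one_step_constrained
    {d : ℕ} (U : Set (EuclideanSpace ℝ (Fin d)))
    (hUne : U.Nonempty) (hUclosed : IsClosed U) (hUconv : Convex ℝ U)
    (proj : EuclideanSpace ℝ (Fin d) → EuclideanSpace ℝ (Fin d))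
    (hproj : ∀ x, proj x ∈ U ∧ ∀ y ∈ U, ‖x - proj x‖ ≤ ‖x - y‖)
    (L : ℝ) (hL : 0 < L)
    (F : EuclideanSpace ℝ (Fin d) → EuclideanSpace ℝ (Fin d))
    (hcoco : ∀ u v, (1 / L) * ‖F u - F v‖ ^ 2 ≤ ⟪F u - F v, u - v⟫)
    (G : EuclideanSpace ℝ (Fin d) → EuclideanSpace ℝ (Fin d))
    (hG : ∀ x, G x = L • (x - proj (x - (1 / L) • F x)))
    (A B : ℕ → ℝ)
    (hApos : ∀ k, 1 ≤ k → 0 < A k) (hBpos : ∀ k, 1 ≤ k → 0 < B k)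
    (hAmono : ∀ k, 1 ≤ k → A k ≤ A (k + 1)) (hBmono : ∀ k, 1 ≤ k → B k ≤ B (k + 1))
    (hAB1 : ∀ k, 2 ≤ k → B (k - 1) / A k = B k / (A k + B k))
    (hAB2 : ∀ k, 2 ≤ k → 1 - 2 * B k / (A k + B k) = A (k - 1) / A k)
    (h gt u_ : ℕ → EuclideanSpace ℝ (Fin d))
    (hgt : ∀ k, gt k = L • (u_ k - proj (u_ k - (1 / L) • h k)))
    (hrec : ∀ k, 1 ≤ k →
      u_ k = (B k / (A k + B k)) • u_ 0
        + (1 - B k / (A k + B k)) • (u_ (k - 1) - (1 / L) • gt (k - 1)))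
    (C : ℕ → ℝ)
    (hC : ∀ k, C k = (A k / (2 * L)) * ‖G (u_ k)‖ ^ 2 + B k * ⟪G (u_ k), u_ k - u_ 0⟫) :
    ∀ k, 2 ≤ k →
      C k - C (k - 1) ≤
        (A k / L) * ‖G (u_ (k - 1)) - gt (k - 1)‖ ^ 2 +
          ((A k - A (k - 1)) / (2 * L)) * ⟪G (u_ (k - 1)), G (u_ (k - 1)) - gt (k - 1)⟫ := by
  intro k hk
  have hk1 : 1 ≤ k := by omega
  have ha := hApos k hk1
  have hb := hBpos k hk1
  have hab : (0:ℝ) < A k + B k := by linarith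
  have habne : A k + B k ≠ 0 := ne_of_gt hab
  rw [hC k, hC (k-1)]
  refine step_main (G (u_ k)) (G (u_ (k-1))) (gt (k-1)) (u_ (k-1)) (u_ 0) (u_ k)
    (A k) (A (k-1)) (B k) (B (k-1)) (B k / (A k + B k)) L hL ha ?_ ?_ ?_ ?_ ?_
  · have h1 := hAB1 k hk
    rw [div_eq_iff (ne_of_gt ha)] at h1
    rw [h1]; ring
  · have h2 := hAB2 k hk
    have h2' : A (k-1) = (1 - 2 * B k / (A k + B k)) * A k := by
      rw [h2]; field_simp
    rw [h2']; ring
  · field_simp; ring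
  · exact hrec k hk1
  · exact coco_G hUconv proj hproj L hL F hcoco G hG (u_ k) (u_ (k-1))
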